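/- If Ann(A) = 0 and A_1 = Σ_{g∈Λ_G∩Σ_G} ρ(L_{g^{-1}})(A_g) + Σ_{g∈Λ_G} A_{g^{-1}} A_g, then A = ⊕_{[g]∈Λ_G/≈} 𝒜_{[g]} is the direct sum of the graded ideals 𝒜_{[g]}, with 𝒜_{[g]}·𝒜_{[h]} = 0 for [g] ≠ [h]. -/
import Mathlib


open Submodule

section
variable {G : Type*} [CommGroup G]

/-- A chain connection: a nonempty list `c` starting at `g`, with all entries in
`Main ∪ Other`, all proper partial products in `Main`, and total product `g'` or `g'⁻¹`. -/
def ChainConnected (Main Other : Set G) (g g' : G) : Prop :=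
  ∃ c : List G, c ≠ [] ∧ c.head? = some g ∧
    (∀ k ∈ c, k ∈ Main ∪ Other) ∧
    (∀ i : ℕ, 0 < i → i < c.length → (c.take i).prod ∈ Main) ∧
    (c.prod = g' ∨ c.prod = g'⁻¹)

end

/-- A `G`-graded Lie-Rinehart algebra `(L, A)` over a field `F`. -/
structure GradedLieRinehart (F : Type*) [Field F] (G : Type*) [CommGroup G] [DecidableEq G]
    (A : Type*) [CommRing A] [Algebra F A]
    (L : Type*) [LieRing L] [LieAlgebra F L] [Module A L] [IsScalarTower F A L] where
  ρ : L →ₗ[F] Derivation F A A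
  ρ_smul : ∀ (a : A) (v : L) (b : A), ρ (a • v) b = a * ρ v b
  ρ_bracket : ∀ v w : L, ρ ⁅v, w⁆ = ⁅ρ v, ρ w⁆
  leibniz : ∀ (v w : L) (a : A), ⁅v, a • w⁆ = a • ⁅v, w⁆ + (ρ v a) • w
  𝓛 : G → Submodule F L
  𝓐 : G → Submodule F A
  internalL : DirectSum.IsInternal 𝓛
  internalA : DirectSum.IsInternal 𝓐
  bracket_mem : ∀ {g h : G} {v w : L}, v ∈ 𝓛 g → w ∈ 𝓛 h → ⁅v, w⁆ ∈ 𝓛 (g * h)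
  mul_mem : ∀ {g h : G} {a b : A}, a ∈ 𝓐 g → b ∈ 𝓐 h → a * b ∈ 𝓐 (g * h)
  smul_mem : ∀ {h g : G} {a : A} {v : L}, a ∈ 𝓐 h → v ∈ 𝓛 g → a • v ∈ 𝓛 (h * g)
  rho_mem : ∀ {g h : G} {v : L} {a : A}, v ∈ 𝓛 g → a ∈ 𝓐 h → ρ v a ∈ 𝓐 (g * h)

namespace GradedLieRinehart

variable {F : Type*} [Field F] {G : Type*} [CommGroup G] [DecidableEq G]
  {A : Type*} [CommRing A] [Algebra F A]
  {L : Type*} [LieRing L] [LieAlgebra F L] [Module A L] [IsScalarTower F A L]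
variable (𝔏 : GradedLieRinehart F G A L)

/-- The support `Σ_G` of the grading of `L`. -/
def SuppL : Set G := {g | g ≠ 1 ∧ 𝔏.𝓛 g ≠ ⊥}

/-- The support `Λ_G` of the grading of `A`. -/
def SuppA : Set G := {g | g ≠ 1 ∧ 𝔏.𝓐 g ≠ ⊥}

/-- `Σ_G^± = Σ_G ∪ Σ_G⁻¹`. -/
def Spm : Set G := {g | g ∈ 𝔏.SuppL ∨ g⁻¹ ∈ 𝔏.SuppL}

/-- `Λ_G^± = Λ_G ∪ Λ_G⁻¹`. -/
def Lpm : Set G := {g | g ∈ 𝔏.SuppA ∨ g⁻¹ ∈ 𝔏.SuppA}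

/-- `g` is `Σ_G`-connected to `g'`. -/
def SigmaConnected (g g' : G) : Prop := ChainConnected 𝔏.Spm 𝔏.Lpm g g'

/-- `g` is `Λ_G`-connected to `g'`. -/
def LambdaConnected (g g' : G) : Prop := ChainConnected (𝔏.Lpm ∪ 𝔏.Spm) (∅ : Set G) g g'

/-- The span of products `A_h • L_g`. -/
def smulSub (h g : G) : Submodule F L :=
  Submodule.span F {x | ∃ a ∈ 𝔏.𝓐 h, ∃ v ∈ 𝔏.𝓛 g, x = a • v}

/-- The span of brackets `[L_h, L_g]`. -/
def bracketSub (h g : G) : Submodule F L :=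
  Submodule.span F {x | ∃ v ∈ 𝔏.𝓛 h, ∃ w ∈ 𝔏.𝓛 g, x = ⁅v, w⁆}

/-- `L_{[g],1}`. -/
def L1class (g : G) : Submodule F L :=
  (⨆ g' ∈ {g' | g' ∈ 𝔏.SuppL ∧ 𝔏.SigmaConnected g g' ∧ g' ∈ 𝔏.SuppA}, 𝔏.smulSub g'⁻¹ g') ⊔
  (⨆ g' ∈ {g' | g' ∈ 𝔏.SuppL ∧ 𝔏.SigmaConnected g g'}, 𝔏.bracketSub g'⁻¹ g')

/-- `V_{[g]}`. -/
def Vclass (g : G) : Submodule F L :=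
  ⨆ g' ∈ {g' | g' ∈ 𝔏.SuppL ∧ 𝔏.SigmaConnected g g'}, 𝔏.𝓛 g'

/-- The ideal `I_{[g]} = L_{[g],1} ⊕ V_{[g]}` attached to the class of `g`. -/
def Iclass (g : G) : Submodule F L := 𝔏.L1class g ⊔ 𝔏.Vclass g

/-- `Σ_{g ∈ Σ_G ∩ Λ_G} A_{g⁻¹} L_g + Σ_{g ∈ Σ_G} [L_{g⁻¹}, L_g]`. -/
def L1full : Submodule F L :=
  (⨆ g ∈ 𝔏.SuppL ∩ 𝔏.SuppA, 𝔏.smulSub g⁻¹ g) ⊔ (⨆ g ∈ 𝔏.SuppL, 𝔏.bracketSub g⁻¹ g)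

/-- An ideal of the Lie-Rinehart algebra `(L,A)`: a Lie ideal which is an `A`-submodule
and satisfies `ρ(I)(A)L ⊆ I`. -/
def IsIdealL (I : Submodule F L) : Prop :=
  (∀ (x : L), ∀ y ∈ I, ⁅x, y⁆ ∈ I) ∧ (∀ (a : A), ∀ y ∈ I, a • y ∈ I) ∧
  (∀ v ∈ I, ∀ (a : A) (w : L), (𝔏.ρ v a) • w ∈ I)

/-- A graded submodule of `L`. -/
def IsGradedL (I : Submodule F L) : Prop := I = ⨆ k : G, I ⊓ 𝔏.𝓛 k

/-- A graded ideal of `(L,A)`. -/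
def IsGradedIdealL (I : Submodule F L) : Prop := 𝔏.IsIdealL I ∧ 𝔏.IsGradedL I

/-- `(L,A)` is gr-simple. -/
def GrSimpleL : Prop :=
  (∃ v w : L, ⁅v, w⁆ ≠ 0) ∧ (∃ a b : A, a * b ≠ 0) ∧ (∃ (a : A) (v : L), a • v ≠ 0) ∧
  ∀ I : Submodule F L, 𝔏.IsGradedIdealL I → I = ⊥ ∨ I = ⊤ ∨ I = LinearMap.ker 𝔏.ρ

/-- The span of products `A_h · A_g`. -/
def mulSub (h g : G) : Submodule F A :=
  Submodule.span F {x | ∃ a ∈ 𝔏.𝓐 h, ∃ b ∈ 𝔏.𝓐 g, x = a * b}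

/-- The span of `ρ(L_h)(A_g)`. -/
def rhoSub (h g : G) : Submodule F A :=
  Submodule.span F {x | ∃ v ∈ 𝔏.𝓛 h, ∃ a ∈ 𝔏.𝓐 g, x = 𝔏.ρ v a}

/-- `A_{[g],1}`. -/
def A1class (g : G) : Submodule F A :=
  (⨆ g' ∈ {g' | g' ∈ 𝔏.SuppA ∧ 𝔏.LambdaConnected g g' ∧ g' ∈ 𝔏.SuppL}, 𝔏.rhoSub g'⁻¹ g') ⊔
  (⨆ g' ∈ {g' | g' ∈ 𝔏.SuppA ∧ 𝔏.LambdaConnected g g'}, 𝔏.mulSub g'⁻¹ g')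

/-- `A_{[g]}`. -/
def Aclass (g : G) : Submodule F A :=
  ⨆ g' ∈ {g' | g' ∈ 𝔏.SuppA ∧ 𝔏.LambdaConnected g g'}, 𝔏.𝓐 g'

/-- `𝒜_{[g]} = A_{[g],1} ⊕ A_{[g]}`. -/
def calA (g : G) : Submodule F A := 𝔏.A1class g ⊔ 𝔏.Aclass g

/-- `Σ_{g ∈ Λ_G ∩ Σ_G} ρ(L_{g⁻¹})(A_g) + Σ_{g ∈ Λ_G} A_{g⁻¹} A_g`. -/
def A1full : Submodule F A :=
  (⨆ g ∈ 𝔏.SuppA ∩ 𝔏.SuppL, 𝔏.rhoSub g⁻¹ g) ⊔ (⨆ g ∈ 𝔏.SuppA, 𝔏.mulSub g⁻¹ g)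

/-- An ideal of the commutative associative algebra `A`. -/
def IsIdealA (I : Submodule F A) : Prop := ∀ (a : A), ∀ x ∈ I, a * x ∈ I

/-- A graded submodule of `A`. -/
def IsGradedA (I : Submodule F A) : Prop := I = ⨆ k : G, I ⊓ 𝔏.𝓐 k

/-- A graded ideal of `A`. -/
def IsGradedIdealA (I : Submodule F A) : Prop := IsIdealA I ∧ 𝔏.IsGradedA I

/-- `A` is gr-simple. -/
def GrSimpleA : Prop :=
  (∃ a b : A, a * b ≠ 0) ∧
  ∀ I : Submodule F A, 𝔏.IsGradedIdealA I → I = ⊥ ∨ I = ⊤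

/-- The graded Lie-Rinehart algebra `(L,A)` is tight. -/
def Tight : Prop :=
  (∀ v : L, (∀ w : L, ⁅v, w⁆ = 0) → 𝔏.ρ v = 0 → v = 0) ∧
  (∀ v : L, (∀ a : A, a • v = 0) → v = 0) ∧
  (∀ a : A, (∀ b : A, a * b = 0) → a = 0) ∧
  Submodule.span F {x : A | ∃ b c : A, x = b * c} = ⊤ ∧
  Submodule.span F {x : L | ∃ (a : A) (w : L), x = a • w} = ⊤ ∧
  𝔏.𝓛 1 = 𝔏.L1full ∧ 𝔏.𝓐 1 = 𝔏.A1full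

/-- `(L,A)` is of maximal length. -/
def MaximalLength : Prop :=
  (∀ g ∈ 𝔏.SuppL, Module.rank F (𝔏.𝓛 g) = 1) ∧ (∀ k ∈ 𝔏.SuppA, Module.rank F (𝔏.𝓐 k) = 1)

/-- `(L,A)` is `G`-multiplicative. -/
def GMultiplicative : Prop :=
  (∀ g ∈ 𝔏.SuppL, ∀ h ∈ 𝔏.SuppL, g * h ∈ 𝔏.SuppL → ∃ v ∈ 𝔏.𝓛 g, ∃ w ∈ 𝔏.𝓛 h, ⁅v, w⁆ ≠ 0) ∧
  (∀ k ∈ 𝔏.SuppA, ∀ g ∈ 𝔏.SuppL, k * g ∈ 𝔏.SuppL → ∃ a ∈ 𝔏.𝓐 k, ∃ v ∈ 𝔏.𝓛 g, a • v ≠ 0) ∧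
  (∀ k ∈ 𝔏.SuppA, ∀ j ∈ 𝔏.SuppA, k * j ∈ 𝔏.SuppA → ∃ a ∈ 𝔏.𝓐 k, ∃ b ∈ 𝔏.𝓐 j, a * b ≠ 0)

/-- A gr-simple ideal of `(L,A)`: a graded ideal with nonzero bracket whose only graded
ideals of `L` contained in it are `0`, itself and its intersection with `Ker ρ`. -/
def GrSimpleIdealL (I : Submodule F L) : Prop :=
  𝔏.IsGradedIdealL I ∧ (∃ x ∈ I, ∃ y ∈ I, ⁅x, y⁆ ≠ 0) ∧
  ∀ J : Submodule F L, 𝔏.IsGradedIdealL J → J ≤ I →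
    (J = ⊥ ∨ J = I ∨ J = LinearMap.ker 𝔏.ρ ⊓ I)

end GradedLieRinehart

open GradedLieRinehart

variable {F : Type*} [Field F] {G : Type*} [CommGroup G] [DecidableEq G]
  {A : Type*} [CommRing A] [Algebra F A]
  {L : Type*} [LieRing L] [LieAlgebra F L] [Module A L] [IsScalarTower F A L]

section ChainAux
variable {G : Type*} [CommGroup G] {M : Set G}

/-- One step of a chain. -/
def ChainStep (M : Set G) (a b : G) : Prop := a ∈ M ∧ a⁻¹ * b ∈ M

private theorem chain_forward (c : List G) : ∀ (g : G), c ≠ [] → c.head? = some g →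
    (∀ k ∈ c, k ∈ M) → (∀ i : ℕ, 0 < i → i < c.length → (c.take i).prod ∈ M) →
    g ∈ M ∧ Relation.ReflTransGen (ChainStep M) g c.prod := by
  induction c using List.reverseRecOn with
  | nil => intro g h; exact absurd rfl h
  | append_singleton d k IH =>
    intro g _ hhead hmem hpart
    rcases eq_or_ne d [] with rfl | hd
    · simp only [List.nil_append, List.head?_cons] at hhead
      obtain rfl : k = g := by injection hhead
      exact ⟨hmem _ (by simp), by simpa using Relation.ReflTransGen.refl (r := ChainStep M) (a := k)⟩
    · have hhd : d.head? = some g := by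
        rwa [List.head?_append_of_ne_nil d hd] at hhead
      have hlen : 0 < d.length := List.length_pos_iff.2 hd
      obtain ⟨hg, hp⟩ := IH g hd hhd
        (fun x hx => hmem x (by simp [hx]))
        (fun i hi hi' => by
          rw [← List.take_append_of_le_length (l₂ := [k]) (le_of_lt hi')]
          exact hpart i hi (by simp; omega))
      have hdM : d.prod ∈ M := by
        have := hpart d.length hlen (by simp)
        rwa [List.take_append_of_le_length (le_refl _), List.take_length] at this
      refine ⟨hg, hp.tail ⟨hdM, ?_⟩⟩
      have : (d ++ [k]).prod = d.prod * k := by simp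
      rw [this, inv_mul_cancel_left]
      exact hmem k (by simp)

private theorem chain_backward {g x : G} (hg : g ∈ M)
    (hp : Relation.ReflTransGen (ChainStep M) g x) :
    ∃ c : List G, c ≠ [] ∧ c.head? = some g ∧ (∀ k ∈ c, k ∈ M) ∧
      (∀ i : ℕ, 0 < i → i < c.length → (c.take i).prod ∈ M) ∧ c.prod = x := by
  induction hp with
  | refl =>
    exact ⟨[g], by simp, by simp, by simpa using hg,
      fun i hi hi' => by simp at hi'; omega, by simp⟩
  | @tail b y hp hstep IH =>
    obtain ⟨c, h1, h2, h3, h4, h5⟩ := IH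
    refine ⟨c ++ [b⁻¹ * y], by simp, ?_, ?_, ?_, ?_⟩
    · rwa [List.head?_append_of_ne_nil c h1]
    · intro k hk
      rcases List.mem_append.1 hk with hk | hk
      · exact h3 k hk
      · simp at hk; rw [hk]; exact hstep.2
    · intro i hi hi'
      simp only [List.length_append, List.length_singleton] at hi'
      rcases lt_or_eq_of_le (Nat.lt_succ_iff.1 hi') with h | h
      · rw [List.take_append_of_le_length (le_of_lt h)]
        exact h4 i hi h
      · rw [h, List.take_append_of_le_length (le_refl _), List.take_length, h5]
        exact hstep.1
    · rw [List.prod_append, h5]; simp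

theorem chainConnected_iff {g g' : G} :
    ChainConnected M ∅ g g' ↔
      g ∈ M ∧ ∃ x, Relation.ReflTransGen (ChainStep M) g x ∧ (x = g' ∨ x = g'⁻¹) := by
  constructor
  · rintro ⟨c, hne, hhead, hmem, hpart, hprod⟩
    simp only [Set.union_empty] at hmem
    obtain ⟨hg, hp⟩ := chain_forward c g hne hhead hmem hpart
    exact ⟨hg, c.prod, hp, hprod⟩
  · rintro ⟨hg, x, hp, hx⟩
    obtain ⟨c, h1, h2, h3, h4, h5⟩ := chain_backward hg hp
    exact ⟨c, h1, h2, fun k hk => by simp [h3 k hk], h4, by rw [h5]; exact hx⟩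

theorem chainStep_inv (hM : ∀ x : G, x ∈ M → x⁻¹ ∈ M) {a b : G} (h : ChainStep M a b) : ChainStep M a⁻¹ b⁻¹ := by
  refine ⟨hM a h.1, ?_⟩
  have : (a⁻¹)⁻¹ * b⁻¹ = (a⁻¹ * b)⁻¹ := by
    rw [mul_inv_rev, inv_inv, mul_comm]
  rw [this]; exact hM _ h.2

theorem chainPath_inv (hM : ∀ x : G, x ∈ M → x⁻¹ ∈ M) {a x : G} (h : Relation.ReflTransGen (ChainStep M) a x) :
    Relation.ReflTransGen (ChainStep M) a⁻¹ x⁻¹ := by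
  induction h with
  | refl => exact Relation.ReflTransGen.refl
  | tail _ hstep IH => exact IH.tail (chainStep_inv hM hstep)

theorem chainPath_symm (hM : ∀ x : G, x ∈ M → x⁻¹ ∈ M) {a x : G} (h : Relation.ReflTransGen (ChainStep M) a x) (hx : x ∈ M) :
    Relation.ReflTransGen (ChainStep M) x a := by
  induction h with
  | refl => exact Relation.ReflTransGen.refl
  | tail hp hstep IH =>
    rename_i b y
    have hstep' : ChainStep M y b := by
      refine ⟨hx, ?_⟩
      have : y⁻¹ * b = (b⁻¹ * y)⁻¹ := by
        rw [mul_inv_rev, inv_inv]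
      rw [this]; exact hM _ hstep.2
    exact (IH hstep.1).head hstep'

theorem chainConn_refl {g : G} (hg : g ∈ M) : ChainConnected M ∅ g g :=
  chainConnected_iff.2 ⟨hg, g, Relation.ReflTransGen.refl, Or.inl rfl⟩

theorem chainConn_self_inv {g : G} (hg : g ∈ M) : ChainConnected M ∅ g g⁻¹ :=
  chainConnected_iff.2 ⟨hg, g, Relation.ReflTransGen.refl, Or.inr (by rw [inv_inv])⟩

theorem chainConn_inv_right {g g' : G} (h : ChainConnected M ∅ g g') :
    ChainConnected M ∅ g g'⁻¹ := by
  obtain ⟨hg, x, hp, hx⟩ := chainConnected_iff.1 h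
  exact chainConnected_iff.2 ⟨hg, x, hp, by rw [inv_inv]; exact hx.symm⟩

theorem chainConn_mul {g k : G} (hg : g ∈ M) (hk : k ∈ M) : ChainConnected M ∅ g (g * k) :=
  chainConnected_iff.2 ⟨hg, g * k, Relation.ReflTransGen.refl.tail
    ⟨hg, by rw [inv_mul_cancel_left]; exact hk⟩, Or.inl rfl⟩

theorem chainConn_symm (hM : ∀ x : G, x ∈ M → x⁻¹ ∈ M) {g g' : G} (h : ChainConnected M ∅ g g') (hg' : g' ∈ M) :
    ChainConnected M ∅ g' g := by
  obtain ⟨hg, x, hp, hx⟩ := chainConnected_iff.1 h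
  have hxM : x ∈ M := by rcases hx with rfl | rfl; exacts [hg', hM _ hg']
  have hrev := chainPath_symm hM hp hxM
  rcases hx with rfl | rfl
  · exact chainConnected_iff.2 ⟨hg', g, hrev, Or.inl rfl⟩
  · refine chainConnected_iff.2 ⟨hg', g⁻¹, ?_, Or.inr rfl⟩
    have := chainPath_inv hM hrev
    rwa [inv_inv] at this

theorem chainConn_trans (hM : ∀ x : G, x ∈ M → x⁻¹ ∈ M) {g g' g'' : G} (h : ChainConnected M ∅ g g')
    (h' : ChainConnected M ∅ g' g'') : ChainConnected M ∅ g g'' := by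
  obtain ⟨hg, x, hp, hx⟩ := chainConnected_iff.1 h
  obtain ⟨hg', y, hp', hy⟩ := chainConnected_iff.1 h'
  rcases hx with rfl | rfl
  · exact chainConnected_iff.2 ⟨hg, y, hp.trans hp', hy⟩
  · refine chainConnected_iff.2 ⟨hg, y⁻¹, hp.trans (chainPath_inv hM hp'), ?_⟩
    rcases hy with rfl | rfl
    · exact Or.inr rfl
    · exact Or.inl (inv_inv _)

end ChainAux


section DirectSumAAux

variable (𝔏 : GradedLieRinehart F G A L)

private lemma lMinv : ∀ x : G, x ∈ 𝔏.Lpm ∪ 𝔏.Spm → x⁻¹ ∈ 𝔏.Lpm ∪ 𝔏.Spm := by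
  rintro x (hx | hx)
  · have hx' : x ∈ 𝔏.SuppA ∨ x⁻¹ ∈ 𝔏.SuppA := hx
    refine Or.inl ?_
    show x⁻¹ ∈ 𝔏.SuppA ∨ (x⁻¹)⁻¹ ∈ 𝔏.SuppA
    rcases hx' with h | h
    · exact Or.inr (by rwa [inv_inv])
    · exact Or.inl h
  · have hx' : x ∈ 𝔏.SuppL ∨ x⁻¹ ∈ 𝔏.SuppL := hx
    refine Or.inr ?_
    show x⁻¹ ∈ 𝔏.SuppL ∨ (x⁻¹)⁻¹ ∈ 𝔏.SuppL
    rcases hx' with h | h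
    · exact Or.inr (by rwa [inv_inv])
    · exact Or.inl h

private lemma memM_A {k : G} (hk : k ∈ 𝔏.SuppA) : k ∈ 𝔏.Lpm ∪ 𝔏.Spm :=
  Or.inl (Or.inl hk)

private lemma memM_Ainv {k : G} (hk : k ∈ 𝔏.SuppA) : k⁻¹ ∈ 𝔏.Lpm ∪ 𝔏.Spm :=
  lMinv 𝔏 k (memM_A 𝔏 hk)

private lemma memM_L {k : G} (hk : k ∈ 𝔏.SuppL) : k ∈ 𝔏.Lpm ∪ 𝔏.Spm :=
  Or.inr (Or.inl hk)

private lemma memM_Linv {k : G} (hk : k ∈ 𝔏.SuppL) : k⁻¹ ∈ 𝔏.Lpm ∪ 𝔏.Spm :=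
  lMinv 𝔏 k (memM_L 𝔏 hk)

private lemma lconn_refl {k : G} (hk : k ∈ 𝔏.Lpm ∪ 𝔏.Spm) : 𝔏.LambdaConnected k k :=
  chainConn_refl hk

private lemma lconn_self_inv {k : G} (hk : k ∈ 𝔏.Lpm ∪ 𝔏.Spm) : 𝔏.LambdaConnected k k⁻¹ :=
  chainConn_self_inv hk

private lemma lconn_mul {a k : G} (ha : a ∈ 𝔏.Lpm ∪ 𝔏.Spm) (hk : k ∈ 𝔏.Lpm ∪ 𝔏.Spm) :
    𝔏.LambdaConnected a (a * k) :=
  chainConn_mul ha hk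

private lemma lconn_symm {a b : G} (h : 𝔏.LambdaConnected a b) (hb : b ∈ 𝔏.Lpm ∪ 𝔏.Spm) :
    𝔏.LambdaConnected b a :=
  chainConn_symm (lMinv 𝔏) h hb

private lemma lconn_trans {a b c : G} (h : 𝔏.LambdaConnected a b)
    (h' : 𝔏.LambdaConnected b c) : 𝔏.LambdaConnected a c :=
  chainConn_trans (lMinv 𝔏) h h'

private lemma lconn_of_inv {a b : G} (h : 𝔏.LambdaConnected a b⁻¹) : 𝔏.LambdaConnected a b := by
  have := chainConn_inv_right (M := 𝔏.Lpm ∪ 𝔏.Spm) h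
  rwa [inv_inv] at this

private lemma mem_suppA_of {k : G} {a : A} (ha : a ∈ 𝔏.𝓐 k) (h0 : a ≠ 0) (h1 : k ≠ 1) :
    k ∈ 𝔏.SuppA :=
  ⟨h1, fun hb => h0 (by rw [hb] at ha; simpa using ha)⟩

private lemma mem_suppL_of {k : G} {v : L} (hv : v ∈ 𝔏.𝓛 k) (h0 : v ≠ 0) (h1 : k ≠ 1) :
    k ∈ 𝔏.SuppL :=
  ⟨h1, fun hb => h0 (by rw [hb] at hv; simpa using hv)⟩

variable {g h : G}

/-- Products of homogeneous elements in non-connected classes vanish. -/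
private lemma keyP (hh : h ∈ 𝔏.SuppA) (hgh : ¬ 𝔏.LambdaConnected g h)
    {g₁ h₁ : G} (hg₁ : g₁ ∈ 𝔏.SuppA) (hh₁ : h₁ ∈ 𝔏.SuppA)
    (cg : 𝔏.LambdaConnected g g₁) (ch : 𝔏.LambdaConnected h h₁)
    {a b : A} (ha : a ∈ 𝔏.𝓐 g₁) (hb : b ∈ 𝔏.𝓐 h₁) : a * b = 0 := by
  by_contra hab
  have hmem : a * b ∈ 𝔏.𝓐 (g₁ * h₁) := 𝔏.mul_mem ha hb
  rcases eq_or_ne (g₁ * h₁) 1 with he | he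
  · have hh₁' : h₁ = g₁⁻¹ := by
      rw [eq_inv_iff_mul_eq_one, mul_comm]; exact he
    have c1 : 𝔏.LambdaConnected g h₁ :=
      lconn_trans 𝔏 cg (hh₁' ▸ lconn_self_inv 𝔏 (memM_A 𝔏 hg₁))
    exact hgh (lconn_trans 𝔏 c1 (lconn_symm 𝔏 ch (memM_A 𝔏 hh₁)))
  · have hkA : g₁ * h₁ ∈ 𝔏.SuppA := mem_suppA_of 𝔏 hmem hab he
    have c1 : 𝔏.LambdaConnected g₁ (g₁ * h₁) := lconn_mul 𝔏 (memM_A 𝔏 hg₁) (memM_A 𝔏 hh₁)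
    have c2 : 𝔏.LambdaConnected h₁ (g₁ * h₁) := by
      have := lconn_mul 𝔏 (memM_A 𝔏 hh₁) (memM_A 𝔏 hg₁)
      rwa [mul_comm h₁ g₁] at this
    have c3 : 𝔏.LambdaConnected g h₁ :=
      lconn_trans 𝔏 (lconn_trans 𝔏 cg c1) (lconn_symm 𝔏 c2 (memM_A 𝔏 hkA))
    exact hgh (lconn_trans 𝔏 c3 (lconn_symm 𝔏 ch (memM_A 𝔏 hh₁)))

/-- An element of `𝒜_{[g]}` times a homogeneous element in the class of `h` vanishes. -/
private lemma keyQ (hh : h ∈ 𝔏.SuppA) (hgh : ¬ 𝔏.LambdaConnected g h)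
    {h₁ : G} (hh₁ : h₁ ∈ 𝔏.SuppA) (ch : 𝔏.LambdaConnected h h₁)
    {b : A} (hb : b ∈ 𝔏.𝓐 h₁) : ∀ x ∈ 𝔏.calA g, x * b = 0 := by
  intro x hx
  have hker : 𝔏.calA g ≤ LinearMap.ker (LinearMap.mulRight F b) := by
    refine sup_le (sup_le ?_ ?_) ?_
    · refine iSup₂_le fun g' hg' => Submodule.span_le.2 ?_
      obtain ⟨hg'A, cgg', hg'L⟩ := hg'
      rintro _ ⟨v, hv, a, ha, rfl⟩
      simp only [SetLike.mem_coe, LinearMap.mem_ker, LinearMap.mulRight_apply]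
      have hab : a * b = 0 := keyP 𝔏 hh hgh hg'A hh₁ cgg' ch ha hb
      have hlei : 𝔏.ρ v (a * b) = a * 𝔏.ρ v b + b * 𝔏.ρ v a := by
        simpa [smul_eq_mul] using (𝔏.ρ v).leibniz a b
      rw [hab, map_zero] at hlei
      have hat : a * 𝔏.ρ v b = 0 := by
        rcases eq_or_ne (𝔏.ρ v b) 0 with h0 | h0
        · rw [h0, mul_zero]
        · have ht : 𝔏.ρ v b ∈ 𝔏.𝓐 (g'⁻¹ * h₁) := 𝔏.rho_mem hv hb
          rcases eq_or_ne (g'⁻¹ * h₁) 1 with he | he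
          · exfalso
            have hge : g' = h₁ := inv_mul_eq_one.1 he
            exact hgh (lconn_trans 𝔏 (hge ▸ cgg') (lconn_symm 𝔏 ch (memM_A 𝔏 hh₁)))
          · have hkA : g'⁻¹ * h₁ ∈ 𝔏.SuppA := mem_suppA_of 𝔏 ht h0 he
            have c1 : 𝔏.LambdaConnected h₁ (g'⁻¹ * h₁) := by
              have := lconn_mul 𝔏 (memM_A 𝔏 hh₁) (memM_Linv 𝔏 hg'L)
              rwa [mul_comm h₁ g'⁻¹] at this
            exact keyP 𝔏 hh hgh hg'A hkA cgg' (lconn_trans 𝔏 ch c1) ha ht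
      rw [hat, zero_add] at hlei
      rw [mul_comm]
      exact hlei.symm
    · refine iSup₂_le fun g' hg' => Submodule.span_le.2 ?_
      obtain ⟨hg'A, cgg'⟩ := hg'
      rintro _ ⟨a, ha, c, hc, rfl⟩
      simp only [SetLike.mem_coe, LinearMap.mem_ker, LinearMap.mulRight_apply]
      rw [mul_assoc, keyP 𝔏 hh hgh hg'A hh₁ cgg' ch hc hb, mul_zero]
    · refine iSup₂_le fun g' hg' => ?_
      obtain ⟨hg'A, cgg'⟩ := hg'
      intro a ha
      exact LinearMap.mem_ker.2 (by
        rw [LinearMap.mulRight_apply]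
        exact keyP 𝔏 hh hgh hg'A hh₁ cgg' ch ha hb)
  have := hker hx
  rwa [LinearMap.mem_ker, LinearMap.mulRight_apply] at this

/-- `ρ(L_{h₁⁻¹})` kills `𝒜_{[g]}` when `h₁` is in the class of `h`. -/
private lemma keyV (hh : h ∈ 𝔏.SuppA) (hgh : ¬ 𝔏.LambdaConnected g h)
    {h₁ : G} (hh₁ : h₁ ∈ 𝔏.SuppA) (hh₁L : h₁ ∈ 𝔏.SuppL) (ch : 𝔏.LambdaConnected h h₁)
    {w : L} (hw : w ∈ 𝔏.𝓛 h₁⁻¹) : ∀ x ∈ 𝔏.calA g, 𝔏.ρ w x = 0 := by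
  have V0 : ∀ k, k ∈ 𝔏.SuppA → 𝔏.LambdaConnected g k → ∀ a ∈ 𝔏.𝓐 k, 𝔏.ρ w a = 0 := by
    intro k hkA cgk a ha
    by_contra hu0
    have hu : 𝔏.ρ w a ∈ 𝔏.𝓐 (h₁⁻¹ * k) := 𝔏.rho_mem hw ha
    rcases eq_or_ne (h₁⁻¹ * k) 1 with he | he
    · have hke : h₁ = k := inv_mul_eq_one.1 he
      exact hgh (lconn_trans 𝔏 (hke ▸ cgk) (lconn_symm 𝔏 ch (memM_A 𝔏 hh₁)))
    · have hmA : h₁⁻¹ * k ∈ 𝔏.SuppA := mem_suppA_of 𝔏 hu hu0 he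
      have c1 : 𝔏.LambdaConnected k (h₁⁻¹ * k) := by
        have := lconn_mul 𝔏 (memM_A 𝔏 hkA) (memM_Linv 𝔏 hh₁L)
        rwa [mul_comm k h₁⁻¹] at this
      have c2 : 𝔏.LambdaConnected (h₁⁻¹ * k) h₁ := by
        refine lconn_of_inv 𝔏 ?_
        have := lconn_mul 𝔏 (memM_A 𝔏 hmA) (memM_Ainv 𝔏 hkA)
        rwa [mul_inv_cancel_right] at this
      have c3 : 𝔏.LambdaConnected g h₁ := lconn_trans 𝔏 (lconn_trans 𝔏 cgk c1) c2
      exact hgh (lconn_trans 𝔏 c3 (lconn_symm 𝔏 ch (memM_A 𝔏 hh₁)))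
  have V0' : ∀ k, k ∈ 𝔏.SuppA → 𝔏.LambdaConnected g k → ∀ a ∈ 𝔏.𝓐 k⁻¹, 𝔏.ρ w a = 0 := by
    intro k hkA cgk a ha
    rcases eq_or_ne a 0 with rfl | ha0
    · exact map_zero _
    · have hk' : k⁻¹ ∈ 𝔏.SuppA := mem_suppA_of 𝔏 ha ha0 (inv_ne_one.2 hkA.1)
      exact V0 k⁻¹ hk' (lconn_trans 𝔏 cgk (lconn_self_inv 𝔏 (memM_A 𝔏 hkA))) a ha
  intro x hx
  have hker : 𝔏.calA g ≤ LinearMap.ker (𝔏.ρ w).toLinearMap := by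
    refine sup_le (sup_le ?_ ?_) ?_
    · refine iSup₂_le fun g' hg' => Submodule.span_le.2 ?_
      obtain ⟨hg'A, cgg', hg'L⟩ := hg'
      rintro _ ⟨v, hv, a, ha, rfl⟩
      simp only [SetLike.mem_coe, LinearMap.mem_ker]
      show 𝔏.ρ w (𝔏.ρ v a) = 0
      have hbr : 𝔏.ρ w (𝔏.ρ v a) = 𝔏.ρ v (𝔏.ρ w a) + 𝔏.ρ ⁅w, v⁆ a := by
        have h1 := DFunLike.congr_fun (𝔏.ρ_bracket w v) a
        rw [Derivation.commutator_apply] at h1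
        rw [h1]; ring
      have h2 : 𝔏.ρ v (𝔏.ρ w a) = 0 := by
        rw [V0 g' hg'A cgg' a ha, map_zero]
      have h3 : 𝔏.ρ ⁅w, v⁆ a = 0 := by
        by_contra h30
        have hne : ⁅w, v⁆ ≠ (0 : L) := by
          rintro hz
          rw [hz] at h30
          simp at h30
        have hbm : ⁅w, v⁆ ∈ 𝔏.𝓛 (h₁⁻¹ * g'⁻¹) := 𝔏.bracket_mem hw hv
        rcases eq_or_ne (h₁⁻¹ * g'⁻¹) 1 with he | he
        · have hge : g' = h₁⁻¹ := by
            have : h₁ = g'⁻¹ := inv_mul_eq_one.1 he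
            rw [this, inv_inv]
          exact hgh (lconn_trans 𝔏 (lconn_of_inv 𝔏 (hge ▸ cgg'))
            (lconn_symm 𝔏 ch (memM_A 𝔏 hh₁)))
        · have hsL : h₁⁻¹ * g'⁻¹ ∈ 𝔏.SuppL := mem_suppL_of 𝔏 hbm hne he
          have c1 : 𝔏.LambdaConnected g' h₁⁻¹ := by
            have := lconn_mul 𝔏 (memM_A 𝔏 hg'A) (memM_L 𝔏 hsL)
            rwa [mul_comm g' (h₁⁻¹ * g'⁻¹), inv_mul_cancel_right] at this
          exact hgh (lconn_trans 𝔏 (lconn_trans 𝔏 cgg' (lconn_of_inv 𝔏 c1))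
            (lconn_symm 𝔏 ch (memM_A 𝔏 hh₁)))
      rw [hbr, h2, h3, add_zero]
    · refine iSup₂_le fun g' hg' => Submodule.span_le.2 ?_
      obtain ⟨hg'A, cgg'⟩ := hg'
      rintro _ ⟨a, ha, c, hc, rfl⟩
      simp only [SetLike.mem_coe, LinearMap.mem_ker]
      show 𝔏.ρ w (a * c) = 0
      have hlei : 𝔏.ρ w (a * c) = a * 𝔏.ρ w c + c * 𝔏.ρ w a := by
        simpa [smul_eq_mul] using (𝔏.ρ w).leibniz a c
      rw [hlei, V0 g' hg'A cgg' c hc, V0' g' hg'A cgg' a ha, mul_zero, mul_zero, add_zero]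
    · refine iSup₂_le fun g' hg' => ?_
      obtain ⟨hg'A, cgg'⟩ := hg'
      intro a ha
      exact LinearMap.mem_ker.2 (V0 g' hg'A cgg' a ha)
  exact hker hx

/-- Products of `𝒜_{[g]}` and `𝒜_{[h]}` vanish for non-connected `g`, `h`. -/
private lemma keyR (hg : g ∈ 𝔏.SuppA) (hh : h ∈ 𝔏.SuppA)
    (hgh : ¬ 𝔏.LambdaConnected g h) :
    ∀ x ∈ 𝔏.calA g, ∀ y ∈ 𝔏.calA h, x * y = 0 := by
  intro x hx y hy
  have hker : 𝔏.calA h ≤ LinearMap.ker (LinearMap.mulLeft F x) := by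
    refine sup_le (sup_le ?_ ?_) ?_
    · refine iSup₂_le fun h' hh' => Submodule.span_le.2 ?_
      obtain ⟨hh'A, chh', hh'L⟩ := hh'
      rintro _ ⟨w, hw, b, hb, rfl⟩
      simp only [SetLike.mem_coe, LinearMap.mem_ker, LinearMap.mulLeft_apply]
      have h1 : x * b = 0 := keyQ 𝔏 hh hgh hh'A chh' hb x hx
      have h2 : 𝔏.ρ w x = 0 := keyV 𝔏 hh hgh hh'A hh'L chh' hw x hx
      have hlei : 𝔏.ρ w (x * b) = x * 𝔏.ρ w b + b * 𝔏.ρ w x := by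
        simpa [smul_eq_mul] using (𝔏.ρ w).leibniz x b
      rw [h1, map_zero, h2, mul_zero, add_zero] at hlei
      exact hlei.symm
    · refine iSup₂_le fun h' hh' => Submodule.span_le.2 ?_
      obtain ⟨hh'A, chh'⟩ := hh'
      rintro _ ⟨b, hb, c, hc, rfl⟩
      simp only [SetLike.mem_coe, LinearMap.mem_ker, LinearMap.mulLeft_apply]
      rcases eq_or_ne b 0 with rfl | hb0
      · rw [zero_mul, mul_zero]
      · have hbA : h'⁻¹ ∈ 𝔏.SuppA := mem_suppA_of 𝔏 hb hb0 (inv_ne_one.2 hh'A.1)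
        have hxb : x * b = 0 :=
          keyQ 𝔏 hh hgh hbA (lconn_trans 𝔏 chh' (lconn_self_inv 𝔏 (memM_A 𝔏 hh'A))) hb x hx
        rw [← mul_assoc, hxb, zero_mul]
    · refine iSup₂_le fun h' hh' => ?_
      obtain ⟨hh'A, chh'⟩ := hh'
      intro b hb
      exact LinearMap.mem_ker.2 (by
        rw [LinearMap.mulLeft_apply]
        exact keyQ 𝔏 hh hgh hh'A chh' hb x hx)
  have := hker hy
  rwa [LinearMap.mem_ker, LinearMap.mulLeft_apply] at this

end DirectSumAAux

/-- If `Ann(A) = 0` and `A_1 = A1full` then `A` is the direct sum of the graded ideals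
`𝒜_{[g]}`, with `𝒜_{[g]} 𝒜_{[h]} = 0` for distinct classes. -/
theorem directSum_A (𝔏 : GradedLieRinehart F G A L)
    (hAnn : ∀ a : A, (∀ b : A, a * b = 0) → a = 0)
    (hA1 : 𝔏.𝓐 1 = 𝔏.A1full) :
    ((⊤ : Submodule F A) = ⨆ g ∈ 𝔏.SuppA, 𝔏.calA g) ∧
    (∀ g ∈ 𝔏.SuppA,
      𝔏.calA g ⊓ (⨆ h ∈ {h | h ∈ 𝔏.SuppA ∧ ¬ 𝔏.LambdaConnected g h}, 𝔏.calA h) = ⊥) ∧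
    (∀ g ∈ 𝔏.SuppA, ∀ h ∈ 𝔏.SuppA, ¬ 𝔏.LambdaConnected g h →
      ∀ x ∈ 𝔏.calA g, ∀ y ∈ 𝔏.calA h, x * y = 0) := by
  have part1 : (⊤ : Submodule F A) = ⨆ g ∈ 𝔏.SuppA, 𝔏.calA g := by
    refine le_antisymm ?_ le_top
    rw [← 𝔏.internalA.submodule_iSup_eq_top]
    refine iSup_le fun k => ?_
    by_cases hk1 : k = 1
    · subst hk1
      rw [hA1]
      refine sup_le ?_ ?_
      · refine iSup₂_le fun g' hg' => ?_
        obtain ⟨hg'A, hg'L⟩ := hg'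
        have h1 : 𝔏.rhoSub g'⁻¹ g' ≤ 𝔏.A1class g' :=
          le_trans (le_iSup₂ (f := fun x (_ : x ∈ {x | x ∈ 𝔏.SuppA ∧
              𝔏.LambdaConnected g' x ∧ x ∈ 𝔏.SuppL}) => 𝔏.rhoSub x⁻¹ x) g'
            ⟨hg'A, lconn_refl 𝔏 (memM_A 𝔏 hg'A), hg'L⟩) le_sup_left
        exact le_trans (le_trans h1 le_sup_left)
          (le_iSup₂ (f := fun x (_ : x ∈ 𝔏.SuppA) => 𝔏.calA x) g' hg'A)
      · refine iSup₂_le fun g' hg' => ?_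
        have h1 : 𝔏.mulSub g'⁻¹ g' ≤ 𝔏.A1class g' :=
          le_trans (le_iSup₂ (f := fun x (_ : x ∈ {x | x ∈ 𝔏.SuppA ∧
              𝔏.LambdaConnected g' x}) => 𝔏.mulSub x⁻¹ x) g'
            ⟨hg', lconn_refl 𝔏 (memM_A 𝔏 hg')⟩) le_sup_right
        exact le_trans (le_trans h1 le_sup_left)
          (le_iSup₂ (f := fun x (_ : x ∈ 𝔏.SuppA) => 𝔏.calA x) g' hg')
    · by_cases hkA : k ∈ 𝔏.SuppA
      · have h1 : 𝔏.𝓐 k ≤ 𝔏.Aclass k :=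
          le_iSup₂ (f := fun x (_ : x ∈ {x | x ∈ 𝔏.SuppA ∧
            𝔏.LambdaConnected k x}) => 𝔏.𝓐 x) k ⟨hkA, lconn_refl 𝔏 (memM_A 𝔏 hkA)⟩
        exact le_trans (le_trans h1 le_sup_right)
          (le_iSup₂ (f := fun x (_ : x ∈ 𝔏.SuppA) => 𝔏.calA x) k hkA)
      · have hbot : 𝔏.𝓐 k = ⊥ := by
          by_contra hb
          exact hkA ⟨hk1, hb⟩
        rw [hbot]
        exact bot_le
  have part3 : ∀ g ∈ 𝔏.SuppA, ∀ h ∈ 𝔏.SuppA, ¬ 𝔏.LambdaConnected g h →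
      ∀ x ∈ 𝔏.calA g, ∀ y ∈ 𝔏.calA h, x * y = 0 :=
    fun g hg h hh hgh => keyR 𝔏 hg hh hgh
  refine ⟨part1, ?_, part3⟩
  intro g hg
  rw [eq_bot_iff]
  rintro x hx
  rw [Submodule.mem_inf] at hx
  obtain ⟨hx1, hx2⟩ := hx
  have hx0 : ∀ b : A, x * b = 0 := by
    intro b
    have hb : b ∈ (⨆ k ∈ 𝔏.SuppA, 𝔏.calA k) := part1 ▸ Submodule.mem_top
    have hker : (⨆ k ∈ 𝔏.SuppA, 𝔏.calA k) ≤ LinearMap.ker (LinearMap.mulLeft F x) := by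
      refine iSup₂_le fun k hk => ?_
      by_cases hconn : 𝔏.LambdaConnected g k
      · intro y hy
        refine LinearMap.mem_ker.2 ?_
        rw [LinearMap.mulLeft_apply]
        have h2 : (⨆ h ∈ {h | h ∈ 𝔏.SuppA ∧ ¬ 𝔏.LambdaConnected g h}, 𝔏.calA h) ≤
            LinearMap.ker (LinearMap.mulRight F y) := by
          refine iSup₂_le fun h' hh' => ?_
          obtain ⟨hh'A, hh'nc⟩ := hh'
          intro z hz
          refine LinearMap.mem_ker.2 ?_
          rw [LinearMap.mulRight_apply]
          have hnc : ¬ 𝔏.LambdaConnected h' k := fun hc =>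
            hh'nc (lconn_trans 𝔏 hconn (lconn_symm 𝔏 hc (memM_A 𝔏 hk)))
          exact keyR 𝔏 hh'A hk hnc z hz y hy
        have := h2 hx2
        rwa [LinearMap.mem_ker, LinearMap.mulRight_apply] at this
      · intro y hy
        refine LinearMap.mem_ker.2 ?_
        rw [LinearMap.mulLeft_apply]
        exact keyR 𝔏 hg hk hconn x hx1 y hy
    have := hker hb
    rwa [LinearMap.mem_ker, LinearMap.mulLeft_apply] at this
  exact (Submodule.mem_bot F).2 (hAnn x hx0)
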